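/- Let A, B be commutative unital K-algebras, Δ : A → A and Δ′ : B → B K-linear with Δ(1)=0 and Δ′(1)=0, and f : A → B K-linear with f(1)=1. If f∘Δ = Δ′∘f, then for every n ≥ 1 and all a_1,…,a_n ∈ A: Σ_{i=1}^{n} Σ_{S⊆{1,…,n},|S|=i} κ(f)_{n−i+1}(K(Δ)_i((a_s)_{s∈S}), (a_j)_{j∉S}) = Σ K(Δ′)_k(κ(f)_{|I_1|}((a_i)_{i∈I_1}),…,κ(f)_{|I_k|}((a_i)_{i∈I_k})), where the right-hand sum runs over all partitions {I_1,…,I_k} of {1,…,n} into nonempty blocks. (This is the Taylor-coefficient form of κ(f)∘K(Δ) = K(Δ′)∘κ(f).) -/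

import Mathlib

set_option linter.unusedSectionVars false
set_option linter.unusedVariables false


open Finset

/-- The `n`-th Koszul bracket of an operator `D` on a commutative ring. -/
noncomputable def koszul {R : Type*} [CommRing R] (D : R → R) (n : ℕ) (a : Fin n → R) : R :=
  ∑ s ∈ (Finset.univ : Finset (Fin n)).powerset.filter fun s => s.Nonempty,
    (-1 : ℤ) ^ (n - s.card) • (D (∏ i ∈ s, a i) * ∏ i ∈ sᶜ, a i)

/-- The set of partitions of `{0,…,n-1}` into nonempty, pairwise disjoint blocks. -/
def partitionsOf (n : ℕ) : Finset (Finset (Finset (Fin n))) :=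
  ((Finset.univ : Finset (Fin n)).powerset.powerset).filter fun P =>
    (∀ s ∈ P, s.Nonempty) ∧ (∀ s ∈ P, ∀ t ∈ P, s ≠ t → s ∩ t = ∅) ∧ P.sup id = Finset.univ

/-- The `n`-th cumulant of a map `f` between commutative rings. -/
noncomputable def cumul {R S : Type*} [CommRing R] [CommRing S]
    (f : R → S) (n : ℕ) (a : Fin n → R) : S :=
  ∑ P ∈ partitionsOf n,
    ((-1 : ℤ) ^ (P.card - 1) * ((P.card - 1).factorial : ℤ)) • ∏ s ∈ P, f (∏ i ∈ s, a i)

/-- Restriction of a family `a` to a finite subset `s` of its index set. -/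
noncomputable def restr {α β : Type*} (a : α → β) (s : Finset α) : Fin s.card → β :=
  fun i => a (s.equivFin.symm i).1

section SetLevel
variable {γ : Type*} [DecidableEq γ] {R S : Type*} [CommRing R] [CommRing S]

/-- Partitions of a finite set `V` into nonempty pairwise disjoint blocks. -/
def sParts (V : Finset γ) : Finset (Finset (Finset γ)) :=
  (V.powerset.powerset).filter fun P =>
    (∀ s ∈ P, s.Nonempty) ∧ (∀ s ∈ P, ∀ t ∈ P, s ≠ t → s ∩ t = ∅) ∧ P.sup id = V

lemma partitionsOf_eq_sParts (n : ℕ) : partitionsOf n = sParts (Finset.univ : Finset (Fin n)) := by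
  unfold partitionsOf sParts
  congr

lemma mem_sParts {V : Finset γ} {P : Finset (Finset γ)} :
    P ∈ sParts V ↔ (∀ s ∈ P, s.Nonempty) ∧ (∀ s ∈ P, ∀ t ∈ P, s ≠ t → s ∩ t = ∅) ∧
      P.sup id = V := by
  constructor
  · intro h; exact (mem_filter.mp h).2
  · intro h
    refine mem_filter.mpr ⟨mem_powerset.mpr ?_, h⟩
    intro s hs
    exact mem_powerset.mpr (h.2.2 ▸ (Finset.le_sup (f := id) hs : s ≤ P.sup id))

lemma sParts_empty : sParts (∅ : Finset γ) = {∅} := by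
  ext P
  simp only [mem_sParts, mem_singleton]
  constructor
  · rintro ⟨h1, -, h3⟩
    by_contra hne
    obtain ⟨s, hs⟩ := Finset.nonempty_iff_ne_empty.mpr hne
    obtain ⟨x, hx⟩ := h1 s hs
    have : x ∈ P.sup id := Finset.mem_sup.mpr ⟨s, hs, hx⟩
    simp [h3] at this
  · rintro rfl; simp

lemma block_subset {V : Finset γ} {P : Finset (Finset γ)} (hP : P ∈ sParts V) {s : Finset γ}
    (hs : s ∈ P) : s ⊆ V := by
  have := (mem_sParts.mp hP).2.2
  exact this ▸ (Finset.le_sup (f := id) hs : s ≤ P.sup id)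

lemma preimage_image_of_inj {α β : Type*} [DecidableEq α] [DecidableEq β]
    (e : α → β) (he : Function.Injective e) (s : Finset α) :
    (s.image e).preimage e he.injOn = s := by
  ext x; simp [Finset.mem_preimage, he.eq_iff]

lemma image_preimage_of_subset {α β : Type*} [DecidableEq α] [DecidableEq β]
    (e : α → β) (he : Function.Injective e) {s : Finset β} {t : Finset α}
    (hs : s ⊆ t.image e) : (s.preimage e he.injOn).image e = s := by
  ext x; simp only [Finset.mem_image, Finset.mem_preimage]
  constructor
  · rintro ⟨y, hy, rfl⟩; exact hy
  · intro hx; obtain ⟨y, -, rfl⟩ := Finset.mem_image.mp (hs hx); exact ⟨y, hx, rfl⟩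

lemma sParts_image {γ' : Type*} [DecidableEq γ'] (e : γ → γ') (he : Function.Injective e)
    (V : Finset γ) :
    sParts (V.image e) = (sParts V).image (fun P => P.image (Finset.image e)) := by
  ext P
  constructor
  · intro hP
    obtain ⟨h1, h2, h3⟩ := mem_sParts.mp hP
    refine mem_image.mpr ⟨P.image (fun s => s.preimage e he.injOn), ?_, ?_⟩
    · rw [mem_sParts]
      refine ⟨?_, ?_, ?_⟩
      · intro s hs
        obtain ⟨t, ht, rfl⟩ := mem_image.mp hs
        obtain ⟨x, hx⟩ := h1 t ht
        obtain ⟨y, _, rfl⟩ := mem_image.mp (block_subset hP ht hx)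
        exact ⟨y, Finset.mem_preimage.mpr hx⟩
      · intro s hs t ht hst
        obtain ⟨s', hs', rfl⟩ := mem_image.mp hs
        obtain ⟨t', ht', rfl⟩ := mem_image.mp ht
        have hne : s' ≠ t' := fun h => hst (by rw [h])
        ext y
        simp only [mem_inter, Finset.mem_preimage, Finset.notMem_empty, iff_false]
        rintro ⟨hy1, hy2⟩
        have : e y ∈ s' ∩ t' := mem_inter.mpr ⟨hy1, hy2⟩
        rw [h2 s' hs' t' ht' hne] at this
        exact absurd this (Finset.notMem_empty _)
      · ext y
        simp only [Finset.mem_sup, mem_image, id]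
        constructor
        · rintro ⟨s, ⟨t, ht, rfl⟩, hy⟩
          obtain ⟨z, hz, hzy⟩ := mem_image.mp (block_subset hP ht (Finset.mem_preimage.mp hy))
          rwa [← he hzy]
        · intro hy
          have : e y ∈ P.sup id := by rw [h3]; exact mem_image_of_mem e hy
          obtain ⟨s, hs, hys⟩ := Finset.mem_sup.mp this
          exact ⟨s.preimage e he.injOn, ⟨s, hs, rfl⟩, Finset.mem_preimage.mpr hys⟩
    · rw [Finset.image_image]
      have : ∀ s ∈ P, (Finset.image e ∘ fun s => s.preimage e he.injOn) s = id s := by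
        intro s hs
        exact image_preimage_of_subset e he (block_subset hP hs)
      rw [Finset.image_congr this, Finset.image_id]
  · intro hP
    obtain ⟨Q, hQ, rfl⟩ := mem_image.mp hP
    obtain ⟨h1, h2, h3⟩ := mem_sParts.mp hQ
    rw [mem_sParts]
    refine ⟨?_, ?_, ?_⟩
    · intro s hs
      obtain ⟨t, ht, rfl⟩ := mem_image.mp hs
      exact (h1 t ht).image e
    · intro s hs t ht hst
      obtain ⟨s', hs', rfl⟩ := mem_image.mp hs
      obtain ⟨t', ht', rfl⟩ := mem_image.mp ht
      have hne : s' ≠ t' := fun h => hst (by rw [h])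
      rw [← Finset.image_inter _ _ he, h2 s' hs' t' ht' hne, Finset.image_empty]
    · ext y
      simp only [Finset.mem_sup, mem_image, id]
      constructor
      · rintro ⟨s, ⟨t, ht, rfl⟩, hy⟩
        obtain ⟨z, hz, rfl⟩ := mem_image.mp hy
        exact ⟨z, by rw [← h3]; exact Finset.mem_sup.mpr ⟨t, ht, hz⟩, rfl⟩
      · rintro ⟨z, hz, rfl⟩
        have : z ∈ Q.sup id := by rw [h3]; exact hz
        obtain ⟨s, hs, hys⟩ := Finset.mem_sup.mp this
        exact ⟨s.image e, ⟨s, hs, rfl⟩, mem_image_of_mem e hys⟩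

lemma sum_sParts_image {γ' : Type*} [DecidableEq γ'] (e : γ → γ') (he : Function.Injective e)
    (V : Finset γ) {M : Type*} [AddCommMonoid M] (g : Finset (Finset γ') → M) :
    ∑ P ∈ sParts (V.image e), g P = ∑ P ∈ sParts V, g (P.image (Finset.image e)) := by
  rw [sParts_image e he, Finset.sum_image]
  intro P _ Q _ h
  exact Finset.image_injective (Finset.image_injective he) h

/-- Cumulant weight. -/
def cw (k : ℕ) : ℤ := (-1) ^ (k - 1) * ((k - 1).factorial : ℤ)

noncomputable def sCumul (f : R → S) (c : γ → R) (V : Finset γ) : S :=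
  ∑ P ∈ sParts V, cw P.card • ∏ s ∈ P, f (∏ x ∈ s, c x)

noncomputable def sKoszul (D : R → R) (c : γ → R) (V : Finset γ) : R :=
  ∑ Q ∈ V.powerset.filter (fun Q => Q.Nonempty),
    (-1 : ℤ) ^ (V.card - Q.card) • (D (∏ x ∈ Q, c x) * ∏ x ∈ V \ Q, c x)

lemma koszul_comp (D : R → R) (c : γ → R) {m : ℕ} (e : Fin m → γ)
    (he : Function.Injective e) :
    koszul D m (c ∘ e) = sKoszul D c (Finset.univ.image e) := by
  unfold koszul sKoszul
  refine Finset.sum_nbij' (fun s => s.image e) (fun Q => Q.preimage e he.injOn) ?_ ?_ ?_ ?_ ?_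
  · intro s hs
    obtain ⟨-, hne⟩ := mem_filter.mp hs
    exact mem_filter.mpr ⟨mem_powerset.mpr (Finset.image_subset_image (subset_univ s)),
      hne.image e⟩
  · intro Q hQ
    obtain ⟨hsub, hne⟩ := mem_filter.mp hQ
    refine mem_filter.mpr ⟨mem_powerset.mpr (subset_univ _), ?_⟩
    obtain ⟨x, hx⟩ := hne
    obtain ⟨y, -, rfl⟩ := mem_image.mp (mem_powerset.mp hsub hx)
    exact ⟨y, Finset.mem_preimage.mpr hx⟩
  · intro s _
    exact preimage_image_of_inj e he s
  · intro Q hQ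
    exact image_preimage_of_subset e he (mem_powerset.mp (mem_filter.mp hQ).1)
  · intro s hs
    have hcardV : (Finset.univ.image e).card = m := by
      rw [Finset.card_image_of_injective _ he, Finset.card_univ, Fintype.card_fin]
    have hcards : (s.image e).card = s.card := Finset.card_image_of_injective _ he
    have hprod : ∏ x ∈ s.image e, c x = ∏ i ∈ s, c (e i) :=
      Finset.prod_image (fun x _ y _ h => he h)
    have hcompl : Finset.univ.image e \ s.image e = sᶜ.image e := by
      rw [Finset.compl_eq_univ_sdiff, Finset.image_sdiff _ _ he]
    have hprodc : ∏ x ∈ sᶜ.image e, c x = ∏ i ∈ sᶜ, c (e i) :=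
      Finset.prod_image (fun x _ y _ h => he h)
    rw [hcardV, hcards, hprod, hcompl, hprodc]
    rfl

lemma cumul_comp (f : R → S) (c : γ → R) {m : ℕ} (e : Fin m → γ)
    (he : Function.Injective e) :
    cumul f m (c ∘ e) = sCumul f c (Finset.univ.image e) := by
  unfold cumul sCumul
  rw [partitionsOf_eq_sParts, sum_sParts_image e he]
  refine Finset.sum_congr rfl fun P hP => ?_
  have hcard : (P.image (Finset.image e)).card = P.card :=
    Finset.card_image_of_injective _ (Finset.image_injective he)
  have hprod : ∏ s ∈ P.image (Finset.image e), f (∏ x ∈ s, c x)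
      = ∏ s ∈ P, f (∏ i ∈ s, c (e i)) := by
    rw [Finset.prod_image (fun x _ y _ h => Finset.image_injective he h)]
    refine Finset.prod_congr rfl fun s _ => ?_
    rw [Finset.prod_image (fun x _ y _ h => he h)]
  rw [hcard, hprod]
  rfl

lemma equivFin_injective (s : Finset γ) :
    Function.Injective (fun i => ((s.equivFin.symm i : {x // x ∈ s}) : γ)) :=
  fun i j h => s.equivFin.symm.injective (Subtype.ext h)

lemma image_equivFin (s : Finset γ) :
    Finset.univ.image (fun i => ((s.equivFin.symm i : {x // x ∈ s}) : γ)) = s := by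
  ext x
  simp only [mem_image, mem_univ, true_and]
  constructor
  · rintro ⟨i, rfl⟩; exact (s.equivFin.symm i).2
  · intro hx; exact ⟨s.equivFin ⟨x, hx⟩, by simp⟩

lemma restr_eq_comp (a : γ → R) (s : Finset γ) :
    restr a s = a ∘ (fun i => ((s.equivFin.symm i : {x // x ∈ s}) : γ)) := rfl

lemma koszul_restr (D : R → R) (a : γ → R) (s : Finset γ) :
    koszul D s.card (restr a s) = sKoszul D a s := by
  rw [restr_eq_comp, koszul_comp D a _ (equivFin_injective s), image_equivFin]

lemma cumul_restr (f : R → S) (a : γ → R) (s : Finset γ) :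
    cumul f s.card (restr a s) = sCumul f a s := by
  rw [restr_eq_comp, cumul_comp f a _ (equivFin_injective s), image_equivFin]

lemma exists_filter_mem_eq_singleton {V : Finset γ} {P : Finset (Finset γ)}
    (hP : P ∈ sParts V) {x : γ} (hx : x ∈ V) :
    ∃ s₀, s₀ ∈ P ∧ x ∈ s₀ ∧ P.filter (fun s => x ∈ s) = {s₀} := by
  obtain ⟨h1, h2, h3⟩ := mem_sParts.mp hP
  obtain ⟨s₀, hs₀, hxs₀⟩ := Finset.mem_sup.mp (h3 ▸ hx : x ∈ P.sup id)
  refine ⟨s₀, hs₀, hxs₀, ?_⟩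
  ext t
  simp only [mem_filter, mem_singleton]
  constructor
  · rintro ⟨ht, hxt⟩
    by_contra hne
    have := h2 t ht s₀ hs₀ hne
    have : x ∈ t ∩ s₀ := mem_inter.mpr ⟨hxt, hxs₀⟩
    rw [h2 t ht s₀ hs₀ hne] at this
    exact absurd this (Finset.notMem_empty _)
  · rintro rfl; exact ⟨hs₀, hxs₀⟩

/-- Splitting a sum over partitions of `insert x T` according to the block containing `x`. -/
lemma sum_sParts_insert {M : Type*} [AddCommMonoid M] (x : γ) (T : Finset γ) (hx : x ∉ T)
    (G : Finset (Finset γ) → M) :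
    ∑ P ∈ sParts (insert x T), G P
      = ∑ U ∈ T.powerset, ∑ Q ∈ sParts (T \ U), G (insert (insert x U) Q) := by
  rw [Finset.sum_sigma' T.powerset (fun U => sParts (T \ U))
    (fun U Q => G (insert (insert x U) Q))]
  refine (Finset.sum_nbij' (fun p => insert (insert x p.1) p.2)
    (fun P => ⟨((P.filter fun s => x ∈ s).sup id).erase x,
      P.erase ((P.filter fun s => x ∈ s).sup id)⟩) ?_ ?_ ?_ ?_ ?_).symm
  · -- i maps into sParts (insert x T)
    rintro ⟨U, Q⟩ hp
    dsimp only
    obtain ⟨hU, hQ⟩ := Finset.mem_sigma.mp hp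
    have hUT : U ⊆ T := mem_powerset.mp hU
    obtain ⟨q1, q2, q3⟩ := mem_sParts.mp hQ
    have hblk : ∀ t ∈ Q, t ⊆ T \ U := fun t ht => block_subset hQ ht
    rw [mem_sParts]
    refine ⟨?_, ?_, ?_⟩
    · intro s hs
      rcases mem_insert.mp hs with rfl | hs
      · exact ⟨x, mem_insert_self x U⟩
      · exact q1 s hs
    · have key : ∀ t ∈ Q, (insert x U) ∩ t = ∅ := by
        intro t ht
        ext y
        simp only [mem_inter, mem_insert, Finset.notMem_empty, iff_false]
        rintro ⟨(rfl | hyU), hyt⟩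
        · exact hx (Finset.mem_sdiff.mp (hblk t ht hyt)).1
        · exact (Finset.mem_sdiff.mp (hblk t ht hyt)).2 hyU
      intro s hs t ht hst
      rcases mem_insert.mp hs with rfl | hs
      · exact key t (mem_insert.mp ht |>.resolve_left (Ne.symm hst))
      · rcases mem_insert.mp ht with rfl | ht
        · rw [Finset.inter_comm]; exact key s hs
        · exact q2 s hs t ht hst
    · rw [Finset.sup_insert, q3]
      simp only [id, Finset.sup_eq_union]
      ext y
      simp only [Finset.mem_union, mem_insert, Finset.mem_sdiff]
      constructor
      · rintro ((rfl | hyU) | ⟨hyT, -⟩)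
        · exact Or.inl rfl
        · exact Or.inr (hUT hyU)
        · exact Or.inr hyT
      · rintro (rfl | hyT)
        · exact Or.inl (Or.inl rfl)
        · by_cases hyU : y ∈ U
          · exact Or.inl (Or.inr hyU)
          · exact Or.inr ⟨hyT, hyU⟩
  · -- j maps into the sigma set
    intro P hP
    obtain ⟨s₀, hs₀P, hxs₀, hfilter⟩ :=
      exists_filter_mem_eq_singleton hP (mem_insert_self x T)
    obtain ⟨h1, h2, h3⟩ := mem_sParts.mp hP
    simp only [hfilter, Finset.sup_singleton, id]
    have hs₀sub : s₀ ⊆ insert x T := block_subset hP hs₀P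
    have hUsub : s₀.erase x ⊆ T := by
      intro y hy
      obtain ⟨hyx, hys₀⟩ := Finset.mem_erase.mp hy
      exact (mem_insert.mp (hs₀sub hys₀)).resolve_left hyx
    refine Finset.mem_sigma.mpr ⟨mem_powerset.mpr hUsub, ?_⟩
    rw [mem_sParts]
    have herase : T \ s₀.erase x = (insert x T) \ s₀ := by
      ext y
      simp only [Finset.mem_sdiff, Finset.mem_erase, mem_insert]
      constructor
      · rintro ⟨hyT, hys⟩
        have hyx : y ≠ x := fun h => hx (h ▸ hyT)
        exact ⟨Or.inr hyT, fun hys₀ => hys ⟨hyx, hys₀⟩⟩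
      · rintro ⟨(rfl | hyT), hys₀⟩
        · exact absurd hxs₀ hys₀
        · exact ⟨hyT, fun h => hys₀ h.2⟩
    refine ⟨fun s hs => h1 s (Finset.mem_of_mem_erase hs), ?_, ?_⟩
    · intro s hs t ht hst
      exact h2 s (Finset.mem_of_mem_erase hs) t (Finset.mem_of_mem_erase ht) hst
    · rw [herase]
      ext y
      simp only [Finset.mem_sup, Finset.mem_erase, id, Finset.mem_sdiff]
      constructor
      · rintro ⟨t, ⟨htne, htP⟩, hyt⟩
        refine ⟨block_subset hP htP hyt, fun hys₀ => ?_⟩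
        have : y ∈ t ∩ s₀ := mem_inter.mpr ⟨hyt, hys₀⟩
        rw [h2 t htP s₀ hs₀P htne] at this
        exact absurd this (Finset.notMem_empty _)
      · rintro ⟨hyV, hys₀⟩
        obtain ⟨t, htP, hyt⟩ := Finset.mem_sup.mp (h3 ▸ hyV : y ∈ P.sup id)
        exact ⟨t, ⟨fun h => hys₀ (h ▸ hyt : y ∈ s₀), htP⟩, hyt⟩
  · -- left inverse
    rintro ⟨U, Q⟩ hp
    obtain ⟨hU, hQ⟩ := Finset.mem_sigma.mp hp
    have hUT : U ⊆ T := mem_powerset.mp hU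
    have hxU : x ∉ U := fun h => hx (hUT h)
    have hxblk : ∀ t ∈ Q, x ∉ t := fun t ht h =>
      hx (Finset.mem_sdiff.mp (block_subset hQ ht h)).1
    have hfil : (insert (insert x U) Q).filter (fun s => x ∈ s) = {insert x U} := by
      ext t
      simp only [mem_filter, mem_insert, mem_singleton]
      constructor
      · rintro ⟨(rfl | ht), hxt⟩
        · rfl
        · exact absurd hxt (hxblk t ht)
      · rintro rfl
        exact ⟨Or.inl rfl, mem_insert_self x U⟩
    have hnotinQ : insert x U ∉ Q := fun h => hxblk _ h (mem_insert_self x U)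
    dsimp only
    rw [hfil, Finset.sup_singleton]
    simp only [id]
    rw [Finset.erase_insert_eq_erase, Finset.erase_eq_of_notMem hxU,
      Finset.erase_insert hnotinQ]
  · -- right inverse
    intro P hP
    obtain ⟨s₀, hs₀P, hxs₀, hfilter⟩ :=
      exists_filter_mem_eq_singleton hP (mem_insert_self x T)
    dsimp only
    rw [hfilter, Finset.sup_singleton]
    simp only [id]
    rw [Finset.insert_erase hxs₀, Finset.insert_erase hs₀P]
  · -- summand equality
    rintro ⟨U, Q⟩ _
    rfl

lemma erase_mem_sParts {Y : Finset γ} {P : Finset (Finset γ)} (hP : P ∈ sParts Y)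
    {V : Finset γ} (hV : V ∈ P) : P.erase V ∈ sParts (Y \ V) := by
  obtain ⟨h1, h2, h3⟩ := mem_sParts.mp hP
  rw [mem_sParts]
  refine ⟨fun s hs => h1 s (Finset.mem_of_mem_erase hs),
    fun s hs t ht hst => h2 s (Finset.mem_of_mem_erase hs) t (Finset.mem_of_mem_erase ht) hst,
    ?_⟩
  ext y
  simp only [Finset.mem_sup, Finset.mem_erase, id, Finset.mem_sdiff]
  constructor
  · rintro ⟨t, ⟨htne, htP⟩, hyt⟩
    refine ⟨block_subset hP htP hyt, fun hyV => ?_⟩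
    have : y ∈ t ∩ V := mem_inter.mpr ⟨hyt, hyV⟩
    rw [h2 t htP V hV htne] at this
    exact absurd this (Finset.notMem_empty _)
  · rintro ⟨hyY, hyV⟩
    obtain ⟨t, htP, hyt⟩ := Finset.mem_sup.mp (h3 ▸ hyY : y ∈ P.sup id)
    exact ⟨t, ⟨fun h => hyV (h ▸ hyt : y ∈ V), htP⟩, hyt⟩

lemma not_mem_sParts_sdiff {Y V : Finset γ} {Q : Finset (Finset γ)}
    (hQ : Q ∈ sParts (Y \ V)) (hVne : V.Nonempty) : V ∉ Q := by
  intro h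
  obtain ⟨x, hx⟩ := hVne
  exact (Finset.mem_sdiff.mp (block_subset hQ h hx)).2 hx

lemma insert_mem_sParts {Y V : Finset γ} (hVY : V ⊆ Y) (hVne : V.Nonempty)
    {Q : Finset (Finset γ)} (hQ : Q ∈ sParts (Y \ V)) : insert V Q ∈ sParts Y := by
  obtain ⟨q1, q2, q3⟩ := mem_sParts.mp hQ
  rw [mem_sParts]
  have hdisj : ∀ t ∈ Q, V ∩ t = ∅ := by
    intro t ht
    ext y
    simp only [mem_inter, Finset.notMem_empty, iff_false]
    rintro ⟨hyV, hyt⟩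
    exact (Finset.mem_sdiff.mp (block_subset hQ ht hyt)).2 hyV
  refine ⟨?_, ?_, ?_⟩
  · intro s hs
    rcases mem_insert.mp hs with rfl | hs
    · exact hVne
    · exact q1 s hs
  · intro s hs t ht hst
    rcases mem_insert.mp hs with h1 | h1 <;> rcases mem_insert.mp ht with h2 | h2
    · exact absurd (h1.trans h2.symm) hst
    · rw [h1]; exact hdisj t h2
    · rw [h2, Finset.inter_comm]; exact hdisj s h1
    · exact q2 s h1 t h2 hst
  · rw [Finset.sup_insert, q3]
    simp only [id, Finset.sup_eq_union]
    exact Finset.union_sdiff_of_subset hVY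

/-- Splitting off a distinguished block. -/
lemma sum_sParts_block {M : Type*} [AddCommMonoid M] (Y : Finset γ)
    (g : Finset (Finset γ) → Finset γ → M) :
    ∑ P ∈ sParts Y, ∑ V ∈ P, g P V
      = ∑ V ∈ Y.powerset.filter (fun V => V.Nonempty), ∑ Q ∈ sParts (Y \ V),
          g (insert V Q) V := by
  rw [Finset.sum_sigma' (sParts Y) (fun P => P) (fun P V => g P V),
    Finset.sum_sigma' (Y.powerset.filter (fun V => V.Nonempty)) (fun V => sParts (Y \ V))
      (fun V Q => g (insert V Q) V)]
  refine Finset.sum_nbij' (fun p => ⟨p.2, p.1.erase p.2⟩) (fun p => ⟨insert p.1 p.2, p.1⟩)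
    ?_ ?_ ?_ ?_ ?_
  · rintro ⟨P, V⟩ hp
    obtain ⟨hP, hV⟩ := Finset.mem_sigma.mp hp
    refine Finset.mem_sigma.mpr ⟨mem_filter.mpr ⟨mem_powerset.mpr (block_subset hP hV),
      (mem_sParts.mp hP).1 V hV⟩, erase_mem_sParts hP hV⟩
  · rintro ⟨V, Q⟩ hp
    obtain ⟨hV, hQ⟩ := Finset.mem_sigma.mp hp
    obtain ⟨hVY, hVne⟩ := mem_filter.mp hV
    exact Finset.mem_sigma.mpr ⟨insert_mem_sParts (mem_powerset.mp hVY) hVne hQ,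
      mem_insert_self _ _⟩
  · rintro ⟨P, V⟩ hp
    obtain ⟨hP, hV⟩ := Finset.mem_sigma.mp hp
    simp only [Finset.insert_erase hV]
  · rintro ⟨V, Q⟩ hp
    obtain ⟨hV, hQ⟩ := Finset.mem_sigma.mp hp
    obtain ⟨hVY, hVne⟩ := mem_filter.mp hV
    simp only [Finset.erase_insert (not_mem_sParts_sdiff hQ hVne)]
  · rintro ⟨P, V⟩ hp
    obtain ⟨hP, hV⟩ := Finset.mem_sigma.mp hp
    simp only [Finset.insert_erase hV]

/-- Splitting a partition into a sub-collection and its complement. -/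
lemma sum_sParts_split {M : Type*} [AddCommMonoid M] (Y : Finset γ)
    (g : Finset (Finset γ) → Finset (Finset γ) → M) :
    ∑ P ∈ sParts Y, ∑ R ∈ P.powerset, g R (P \ R)
      = ∑ W ∈ Y.powerset, ∑ R ∈ sParts W, ∑ Q ∈ sParts (Y \ W), g R Q := by
  have hrhs : ∀ W, (∑ R ∈ sParts W, ∑ Q ∈ sParts (Y \ W), g R Q)
      = ∑ p ∈ (sParts W) ×ˢ (sParts (Y \ W)), g p.1 p.2 := fun W =>
    (Finset.sum_product (s := sParts W) (t := sParts (Y \ W))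
      (f := fun p => g p.1 p.2)).symm
  rw [Finset.sum_congr rfl (fun W _ => hrhs W)]
  rw [Finset.sum_sigma' (sParts Y) (fun P => P.powerset) (fun P R => g R (P \ R)),
    Finset.sum_sigma' Y.powerset (fun W => (sParts W) ×ˢ (sParts (Y \ W)))
      (fun W p => g p.1 p.2)]
  refine Finset.sum_nbij' (fun p => ⟨p.2.sup id, (p.2, p.1 \ p.2)⟩)
    (fun p => ⟨p.2.1 ∪ p.2.2, p.2.1⟩) ?_ ?_ ?_ ?_ ?_
  · rintro ⟨P, R⟩ hp
    obtain ⟨hP, hR⟩ := Finset.mem_sigma.mp hp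
    have hRP : R ⊆ P := mem_powerset.mp hR
    obtain ⟨h1, h2, h3⟩ := mem_sParts.mp hP
    have hWY : R.sup id ⊆ Y := h3 ▸ Finset.sup_mono hRP
    refine Finset.mem_sigma.mpr ⟨mem_powerset.mpr hWY, Finset.mem_product.mpr ⟨?_, ?_⟩⟩
    · exact mem_sParts.mpr ⟨fun s hs => h1 s (hRP hs),
        fun s hs t ht hst => h2 s (hRP hs) t (hRP ht) hst, rfl⟩
    · rw [mem_sParts]
      refine ⟨fun s hs => h1 s (Finset.mem_sdiff.mp hs).1,
        fun s hs t ht hst => h2 s (Finset.mem_sdiff.mp hs).1 t (Finset.mem_sdiff.mp ht).1 hst,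
        ?_⟩
      ext y
      simp only [Finset.mem_sup, Finset.mem_sdiff, id]
      constructor
      · rintro ⟨t, ⟨htP, htR⟩, hyt⟩
        refine ⟨h3 ▸ Finset.mem_sup.mpr ⟨t, htP, hyt⟩, ?_⟩
        rintro ⟨r, hrR, hyr⟩
        have hne : t ≠ r := fun h => htR (h ▸ hrR)
        have : y ∈ t ∩ r := mem_inter.mpr ⟨hyt, hyr⟩
        rw [h2 t htP r (hRP hrR) hne] at this
        exact absurd this (Finset.notMem_empty _)
      · rintro ⟨hyY, hyW⟩
        obtain ⟨t, htP, hyt⟩ := Finset.mem_sup.mp (h3 ▸ hyY : y ∈ P.sup id)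
        exact ⟨t, ⟨htP, fun htR => hyW ⟨t, htR, hyt⟩⟩, hyt⟩
  · rintro ⟨W, R, Q⟩ hp
    obtain ⟨hW, hRQ⟩ := Finset.mem_sigma.mp hp
    obtain ⟨hR, hQ⟩ := Finset.mem_product.mp hRQ
    have hWY : W ⊆ Y := mem_powerset.mp hW
    obtain ⟨r1, r2, r3⟩ := mem_sParts.mp hR
    obtain ⟨q1, q2, q3⟩ := mem_sParts.mp hQ
    have hdisj : ∀ s ∈ R, ∀ t ∈ Q, s ∩ t = ∅ := by
      intro s hs t ht
      ext y
      simp only [mem_inter, Finset.notMem_empty, iff_false]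
      rintro ⟨hys, hyt⟩
      exact (Finset.mem_sdiff.mp (block_subset hQ ht hyt)).2 (block_subset hR hs hys)
    refine Finset.mem_sigma.mpr ⟨?_, mem_powerset.mpr Finset.subset_union_left⟩
    rw [mem_sParts]
    refine ⟨?_, ?_, ?_⟩
    · intro s hs
      rcases Finset.mem_union.mp hs with hs | hs
      · exact r1 s hs
      · exact q1 s hs
    · intro s hs t ht hst
      rcases Finset.mem_union.mp hs with hs | hs <;>
        rcases Finset.mem_union.mp ht with ht | ht
      · exact r2 s hs t ht hst
      · exact hdisj s hs t ht
      · rw [Finset.inter_comm]; exact hdisj t ht s hs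
      · exact q2 s hs t ht hst
    · rw [Finset.sup_union, r3, q3, Finset.sup_eq_union, Finset.union_sdiff_of_subset hWY]
  · rintro ⟨P, R⟩ hp
    obtain ⟨hP, hR⟩ := Finset.mem_sigma.mp hp
    simp only [Finset.union_sdiff_of_subset (mem_powerset.mp hR)]
  · rintro ⟨W, R, Q⟩ hp
    obtain ⟨hW, hRQ⟩ := Finset.mem_sigma.mp hp
    obtain ⟨hR, hQ⟩ := Finset.mem_product.mp hRQ
    have hRQdisj : Disjoint R Q := by
      rw [Finset.disjoint_left]
      intro s hsR hsQ
      obtain ⟨x, hx⟩ := (mem_sParts.mp hR).1 s hsR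
      exact (Finset.mem_sdiff.mp (block_subset hQ hsQ hx)).2 (block_subset hR hsR hx)
    have h1 : (R ∪ Q) \ R = Q := Finset.union_sdiff_cancel_left hRQdisj
    have h2 : R.sup id = W := (mem_sParts.mp hR).2.2
    simp only [h1, h2]
  · rintro ⟨P, R⟩ hp
    rfl

lemma sum_powerset_sdiff_comm {M : Type*} [AddCommMonoid M] (Y : Finset γ)
    (h : Finset γ → Finset γ → M) :
    ∑ W ∈ Y.powerset, h W (Y \ W) = ∑ V ∈ Y.powerset, h (Y \ V) V := by
  refine Finset.sum_nbij' (fun W => Y \ W) (fun V => Y \ V) ?_ ?_ ?_ ?_ ?_ <;>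
    intro W hW
  · exact mem_powerset.mpr (Finset.sdiff_subset)
  · exact mem_powerset.mpr (Finset.sdiff_subset)
  · show Y \ (Y \ W) = W
    rw [Finset.sdiff_sdiff_self_left, Finset.inter_eq_right.mpr (mem_powerset.mp hW)]
  · show Y \ (Y \ W) = W
    rw [Finset.sdiff_sdiff_self_left, Finset.inter_eq_right.mpr (mem_powerset.mp hW)]
  · show h W (Y \ W) = h (Y \ (Y \ W)) (Y \ W)
    rw [Finset.sdiff_sdiff_self_left, Finset.inter_eq_right.mpr (mem_powerset.mp hW)]

lemma sum_powerset_powerset {M : Type*} [AddCommMonoid M] (T : Finset γ)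
    (g : Finset γ → Finset γ → M) :
    ∑ U ∈ T.powerset, ∑ V ∈ U.powerset, g U V
      = ∑ V ∈ T.powerset, ∑ W ∈ (T \ V).powerset, g (V ∪ W) V := by
  rw [Finset.sum_sigma' T.powerset (fun U => U.powerset) (fun U V => g U V),
    Finset.sum_sigma' T.powerset (fun V => (T \ V).powerset) (fun V W => g (V ∪ W) V)]
  refine Finset.sum_nbij' (fun p => ⟨p.2, p.1 \ p.2⟩) (fun p => ⟨p.1 ∪ p.2, p.1⟩)
    ?_ ?_ ?_ ?_ ?_
  · rintro ⟨U, V⟩ hp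
    obtain ⟨hU, hV⟩ := Finset.mem_sigma.mp hp
    exact Finset.mem_sigma.mpr ⟨mem_powerset.mpr ((mem_powerset.mp hV).trans
      (mem_powerset.mp hU)), mem_powerset.mpr (Finset.sdiff_subset_sdiff
      (mem_powerset.mp hU) (Finset.Subset.refl _))⟩
  · rintro ⟨V, W⟩ hp
    obtain ⟨hV, hW⟩ := Finset.mem_sigma.mp hp
    refine Finset.mem_sigma.mpr ⟨mem_powerset.mpr (Finset.union_subset (mem_powerset.mp hV)
      ((mem_powerset.mp hW).trans Finset.sdiff_subset)), mem_powerset.mpr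
      Finset.subset_union_left⟩
  · rintro ⟨U, V⟩ hp
    obtain ⟨hU, hV⟩ := Finset.mem_sigma.mp hp
    simp only [Finset.union_sdiff_of_subset (mem_powerset.mp hV)]
  · rintro ⟨V, W⟩ hp
    obtain ⟨hV, hW⟩ := Finset.mem_sigma.mp hp
    have : Disjoint V W := Finset.disjoint_of_subset_right (mem_powerset.mp hW)
      Finset.disjoint_sdiff
    simp only [Finset.union_sdiff_cancel_left this]
  · rintro ⟨U, V⟩ hp
    obtain ⟨hU, hV⟩ := Finset.mem_sigma.mp hp
    simp only [Finset.union_sdiff_of_subset (mem_powerset.mp hV)]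

lemma sum_powerset_sdiff_swap {M : Type*} [AddCommMonoid M] (Y : Finset γ)
    (g : Finset γ → Finset γ → M) :
    ∑ U ∈ Y.powerset, ∑ V ∈ (Y \ U).powerset, g U V
      = ∑ V ∈ Y.powerset, ∑ U ∈ (Y \ V).powerset, g U V := by
  rw [Finset.sum_sigma' Y.powerset (fun U => (Y \ U).powerset) (fun U V => g U V),
    Finset.sum_sigma' Y.powerset (fun V => (Y \ V).powerset) (fun V U => g U V)]
  refine Finset.sum_nbij' (fun p => ⟨p.2, p.1⟩) (fun p => ⟨p.2, p.1⟩) ?_ ?_ ?_ ?_ ?_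
  · rintro ⟨U, V⟩ hp
    obtain ⟨hU, hV⟩ := Finset.mem_sigma.mp hp
    have hVY : V ⊆ Y \ U := mem_powerset.mp hV
    refine Finset.mem_sigma.mpr ⟨mem_powerset.mpr (hVY.trans Finset.sdiff_subset),
      mem_powerset.mpr ?_⟩
    intro y hy
    refine Finset.mem_sdiff.mpr ⟨mem_powerset.mp hU hy, fun hyV => ?_⟩
    exact (Finset.mem_sdiff.mp (hVY hyV)).2 hy
  · rintro ⟨V, U⟩ hp
    obtain ⟨hV, hU⟩ := Finset.mem_sigma.mp hp
    have hUY : U ⊆ Y \ V := mem_powerset.mp hU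
    refine Finset.mem_sigma.mpr ⟨mem_powerset.mpr (hUY.trans Finset.sdiff_subset),
      mem_powerset.mpr ?_⟩
    intro y hy
    refine Finset.mem_sdiff.mpr ⟨mem_powerset.mp hV hy, fun hyU => ?_⟩
    exact (Finset.mem_sdiff.mp (hUY hyU)).2 hy
  · rintro ⟨U, V⟩ _; rfl
  · rintro ⟨V, U⟩ _; rfl
  · rintro ⟨U, V⟩ _; rfl

section Core
variable (F : Finset γ → S)

/-- Formal convolution inverse of a moment function. -/
noncomputable def invW (W : Finset γ) : S :=
  ∑ Q ∈ sParts W, ((-1 : ℤ) ^ Q.card * (Q.card.factorial : ℤ)) • ∏ t ∈ Q, F t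

/-- Cumulants of a moment function. -/
noncomputable def kap (V : Finset γ) : S :=
  ∑ P ∈ sParts V, cw P.card • ∏ s ∈ P, F s

/-- The "exponential" of the cumulants. -/
noncomputable def expK (V : Finset γ) : S :=
  ∑ P ∈ sParts V, ∏ s ∈ P, kap F s

/-- The "exponential of minus the cumulants". -/
noncomputable def negK (W : Finset γ) : S :=
  ∑ R ∈ sParts W, ((-1 : ℤ) ^ R.card) • ∏ s ∈ R, kap F s

lemma invW_empty : invW F ∅ = 1 := by
  simp [invW, sParts_empty]

lemma nonempty_of_mem_sParts {Y : Finset γ} (hY : Y.Nonempty) {P : Finset (Finset γ)}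
    (hP : P ∈ sParts Y) : P.Nonempty := by
  obtain ⟨x, hx⟩ := hY
  obtain ⟨h1, h2, h3⟩ := mem_sParts.mp hP
  obtain ⟨s, hs, -⟩ := Finset.mem_sup.mp (h3 ▸ hx : x ∈ P.sup id)
  exact ⟨s, hs⟩

lemma invW_recursion {Y : Finset γ} (hY : Y.Nonempty) :
    invW F Y = -∑ V ∈ Y.powerset.filter (fun V => V.Nonempty), F V * invW F (Y \ V) := by
  have step1 : invW F Y = ∑ P ∈ sParts Y, ∑ V ∈ P,
      ((-1 : ℤ) ^ P.card * ((P.card - 1).factorial : ℤ)) • ∏ t ∈ P, F t := by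
    unfold invW
    refine Finset.sum_congr rfl fun P hP => ?_
    rw [Finset.sum_const]
    have hpos : 0 < P.card := Finset.card_pos.mpr (nonempty_of_mem_sParts hY hP)
    have hfac : (P.card.factorial : ℤ) = (P.card : ℤ) * ((P.card - 1).factorial : ℤ) := by
      rw [← Nat.mul_factorial_pred hpos.ne', Nat.cast_mul]
    simp only [zsmul_eq_mul, nsmul_eq_mul]
    push_cast [hfac]
    ring
  rw [step1, sum_sParts_block Y (fun P V =>
    ((-1 : ℤ) ^ P.card * ((P.card - 1).factorial : ℤ)) • ∏ t ∈ P, F t), ← Finset.sum_neg_distrib]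
  refine Finset.sum_congr rfl fun V hV => ?_
  obtain ⟨hVY, hVne⟩ := mem_filter.mp hV
  rw [invW, Finset.mul_sum, ← Finset.sum_neg_distrib]
  refine Finset.sum_congr rfl fun Q hQ => ?_
  have hVQ : V ∉ Q := not_mem_sParts_sdiff hQ hVne
  rw [Finset.card_insert_of_notMem hVQ, Finset.prod_insert hVQ]
  simp only [Nat.add_sub_cancel, zsmul_eq_mul, pow_succ]
  push_cast
  ring

lemma sum_powerset_delta {M : Type*} [AddCommMonoid M] (W : Finset γ) (h : Finset γ → M) :
    ∑ U ∈ W.powerset, (if W \ U = ∅ then h U else 0) = h W := by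
  rw [Finset.sum_eq_single W]
  · simp
  · intro U hU hne
    rw [if_neg]
    intro hdiff
    exact hne (Finset.Subset.antisymm (mem_powerset.mp hU)
      (Finset.sdiff_eq_empty_iff_subset.mp hdiff))
  · intro h'
    exact absurd (Finset.mem_powerset_self W) h'

variable (hF : F ∅ = 1)
include hF

lemma conv_invW (Y : Finset γ) :
    ∑ W ∈ Y.powerset, invW F W * F (Y \ W) = if Y = ∅ then 1 else 0 := by
  rcases Y.eq_empty_or_nonempty with rfl | hY
  · simp [invW_empty, hF]
  · rw [if_neg (Finset.nonempty_iff_ne_empty.mp hY)]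
    rw [sum_powerset_sdiff_comm Y (fun W V => invW F W * F V)]
    rw [← Finset.sum_filter_add_sum_filter_not Y.powerset (fun V => V.Nonempty)]
    have hemp : Y.powerset.filter (fun V => ¬V.Nonempty) = {∅} := by
      ext U
      simp only [mem_filter, mem_powerset, mem_singleton, Finset.not_nonempty_iff_eq_empty]
      exact ⟨fun h => h.2, fun h => ⟨h ▸ Finset.empty_subset Y, h⟩⟩
    rw [hemp, Finset.sum_singleton, Finset.sdiff_empty, hF, mul_one]
    have hcomm : ∑ x ∈ Y.powerset.filter (fun V => V.Nonempty), invW F (Y \ x) * F x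
        = ∑ V ∈ Y.powerset.filter (fun V => V.Nonempty), F V * invW F (Y \ V) :=
      Finset.sum_congr rfl fun V _ => mul_comm _ _
    rw [hcomm, invW_recursion F hY, add_neg_cancel]

lemma expK_eq (V : Finset γ) : expK F V = F V := by
  induction V using Finset.strongInduction with
  | _ V ih =>
    rcases V.eq_empty_or_nonempty with rfl | hne
    · simp [expK, sParts_empty, hF]
    · obtain ⟨x, hx⟩ := hne
      set T := V.erase x with hT
      have hxT : x ∉ T := Finset.notMem_erase x V
      have hVx : V = insert x T := (Finset.insert_erase hx).symm
      have hTV : ∀ U : Finset γ, T \ U ⊂ V := by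
        intro U
        refine Finset.ssubset_of_subset_of_ssubset Finset.sdiff_subset ?_
        rw [hVx]
        exact Finset.ssubset_insert hxT
      rw [hVx, expK, sum_sParts_insert x T hxT]
      have main : ∀ U ∈ T.powerset,
          (∑ Q ∈ sParts (T \ U), ∏ s ∈ insert (insert x U) Q, kap F s)
            = kap F (insert x U) * F (T \ U) := by
        intro U hU
        have h1 : ∀ Q ∈ sParts (T \ U), insert x U ∉ Q := by
          intro Q hQ hmem
          exact hxT (Finset.mem_sdiff.mp (block_subset hQ hmem (mem_insert_self x U))).1
        rw [← ih (T \ U) (hTV U), expK, Finset.mul_sum]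
        exact Finset.sum_congr rfl fun Q hQ => Finset.prod_insert (h1 Q hQ)
      rw [Finset.sum_congr rfl main]
      have kapexp : ∀ U ∈ T.powerset, kap F (insert x U) * F (T \ U)
          = ∑ U' ∈ U.powerset, ∑ Q ∈ sParts (U \ U'),
              (((-1 : ℤ) ^ Q.card * (Q.card.factorial : ℤ)) •
                (F (insert x U') * ∏ t ∈ Q, F t)) * F (T \ U) := by
        intro U hU
        have hUT : U ⊆ T := mem_powerset.mp hU
        have hxU : x ∉ U := fun h => hxT (hUT h)
        rw [kap, sum_sParts_insert x U hxU, Finset.sum_mul]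
        refine Finset.sum_congr rfl fun U' hU' => ?_
        rw [Finset.sum_mul]
        refine Finset.sum_congr rfl fun Q hQ => ?_
        have hnm : insert x U' ∉ Q := by
          intro hmem
          exact hxU (Finset.mem_sdiff.mp (block_subset hQ hmem (mem_insert_self x U'))).1
        rw [Finset.card_insert_of_notMem hnm, Finset.prod_insert hnm]
        unfold cw
        simp only [Nat.add_sub_cancel]
      rw [Finset.sum_congr rfl kapexp]
      rw [sum_powerset_powerset T (fun U U' => ∑ Q ∈ sParts (U \ U'),
        (((-1 : ℤ) ^ Q.card * (Q.card.factorial : ℤ)) •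
          (F (insert x U') * ∏ t ∈ Q, F t)) * F (T \ U))]
      have inner : ∀ U' ∈ T.powerset,
          (∑ W ∈ (T \ U').powerset, ∑ Q ∈ sParts ((U' ∪ W) \ U'),
            (((-1 : ℤ) ^ Q.card * (Q.card.factorial : ℤ)) •
              (F (insert x U') * ∏ t ∈ Q, F t)) * F (T \ (U' ∪ W)))
          = if T \ U' = ∅ then F (insert x U') else 0 := by
        intro U' hU'
        have hstep : ∀ W ∈ (T \ U').powerset,
            (∑ Q ∈ sParts ((U' ∪ W) \ U'),
              (((-1 : ℤ) ^ Q.card * (Q.card.factorial : ℤ)) •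
                (F (insert x U') * ∏ t ∈ Q, F t)) * F (T \ (U' ∪ W)))
            = F (insert x U') * (invW F W * F ((T \ U') \ W)) := by
          intro W hW
          have hd : Disjoint U' W :=
            Finset.disjoint_of_subset_right (mem_powerset.mp hW) Finset.disjoint_sdiff
          have h1 : (U' ∪ W) \ U' = W := Finset.union_sdiff_cancel_left hd
          have h2 : T \ (U' ∪ W) = (T \ U') \ W := by
            ext y
            simp only [Finset.mem_sdiff, Finset.mem_union]
            tauto
          rw [h1, h2, invW, Finset.sum_mul, Finset.mul_sum]
          refine Finset.sum_congr rfl fun Q hQ => ?_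
          simp only [zsmul_eq_mul]
          ring
        rw [Finset.sum_congr rfl hstep, ← Finset.mul_sum,
          conv_invW F hF (T \ U'), mul_ite, mul_one, mul_zero]
      rw [Finset.sum_congr rfl inner, sum_powerset_delta T (fun U' => F (insert x U'))]

/-- `expK` convolved with `negK` is the convolution unit. -/
lemma conv_negK (Y : Finset γ) :
    ∑ W ∈ Y.powerset, F (Y \ W) * negK F W = if Y = ∅ then 1 else 0 := by
  have step1 : ∀ W ∈ Y.powerset, F (Y \ W) * negK F W
      = ∑ R ∈ sParts W, ∑ Q ∈ sParts (Y \ W),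
          ((-1 : ℤ) ^ R.card) • ((∏ s ∈ Q, kap F s) * ∏ s ∈ R, kap F s) := by
    intro W hW
    rw [mul_comm, ← expK_eq F hF (Y \ W), negK, expK, Finset.sum_mul_sum]
    refine Finset.sum_congr rfl fun R _ => Finset.sum_congr rfl fun Q _ => ?_
    simp only [zsmul_eq_mul]
    ring
  rw [Finset.sum_congr rfl step1, ← sum_sParts_split Y (fun R Q =>
    ((-1 : ℤ) ^ R.card) • ((∏ s ∈ Q, kap F s) * ∏ s ∈ R, kap F s))]
  have step2 : ∀ P ∈ sParts Y, (∑ R ∈ P.powerset,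
      ((-1 : ℤ) ^ R.card) • ((∏ s ∈ P \ R, kap F s) * ∏ s ∈ R, kap F s))
      = (if P = ∅ then 1 else 0 : ℤ) • ∏ s ∈ P, kap F s := by
    intro P hP
    rw [← Finset.sum_powerset_neg_one_pow_card, Finset.sum_smul]
    refine Finset.sum_congr rfl fun R hR => ?_
    rw [Finset.prod_sdiff (mem_powerset.mp hR)]
  rw [Finset.sum_congr rfl step2]
  rcases Y.eq_empty_or_nonempty with rfl | hY
  · simp [sParts_empty]
  · rw [if_neg (Finset.nonempty_iff_ne_empty.mp hY)]
    refine Finset.sum_eq_zero fun P hP => ?_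
    rw [if_neg (Finset.nonempty_iff_ne_empty.mp (nonempty_of_mem_sParts hY hP)), zero_smul]

lemma negK_eq_invW (W : Finset γ) : negK F W = invW F W := by
  have h1 : negK F W = ∑ U ∈ W.powerset, (if W \ U = ∅ then negK F U else 0) :=
    (sum_powerset_delta W _).symm
  rw [h1]
  have h2 : ∀ U ∈ W.powerset, (if W \ U = ∅ then negK F U else 0)
      = ∑ W' ∈ (W \ U).powerset, negK F U * (invW F W' * F ((W \ U) \ W')) := by
    intro U hU
    rw [← Finset.mul_sum, conv_invW F hF (W \ U), mul_ite, mul_one, mul_zero]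
  rw [Finset.sum_congr rfl h2,
    sum_powerset_sdiff_swap W (fun U W' => negK F U * (invW F W' * F ((W \ U) \ W')))]
  have h3 : ∀ W' ∈ W.powerset,
      (∑ U ∈ (W \ W').powerset, negK F U * (invW F W' * F ((W \ U) \ W')))
      = invW F W' * (if W \ W' = ∅ then 1 else 0) := by
    intro W' hW'
    rw [← conv_negK F hF (W \ W'), Finset.mul_sum]
    refine Finset.sum_congr rfl fun U hU => ?_
    have hss : (W \ U) \ W' = (W \ W') \ U := by
      ext y
      simp only [Finset.mem_sdiff]
      tauto
    rw [hss]
    ring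
  rw [Finset.sum_congr rfl h3]
  have h4 : ∀ W' ∈ W.powerset, invW F W' * (if W \ W' = ∅ then 1 else 0)
      = if W \ W' = ∅ then invW F W' else 0 := fun W' _ => by split <;> simp
  rw [Finset.sum_congr rfl h4, sum_powerset_delta W (fun W' => invW F W')]

end Core
lemma sum_powerset_image {γ' : Type*} [DecidableEq γ'] (e : γ → γ')
    (he : Function.Injective e) (T : Finset γ) {M : Type*} [AddCommMonoid M]
    (g : Finset γ' → M) :
    ∑ U ∈ (T.image e).powerset, g U = ∑ U ∈ T.powerset, g (U.image e) := by
  refine Finset.sum_nbij' (fun U => U.preimage e he.injOn) (fun U => U.image e) ?_ ?_ ?_ ?_ ?_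
  · intro U hU
    refine mem_powerset.mpr fun y hy => ?_
    obtain ⟨z, hz, hze⟩ := mem_image.mp (mem_powerset.mp hU (Finset.mem_preimage.mp hy))
    rwa [← he hze]
  · intro U hU
    exact mem_powerset.mpr (Finset.image_subset_image (mem_powerset.mp hU))
  · intro U hU
    exact image_preimage_of_subset e he (mem_powerset.mp hU)
  · intro U hU
    exact preimage_image_of_inj e he U
  · intro U hU
    rw [image_preimage_of_subset e he (mem_powerset.mp hU)]

lemma sum_powerset_powerset_filter {M : Type*} [AddCommMonoid M] (Y : Finset γ)
    (g : Finset γ → Finset γ → M) :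
    ∑ S ∈ Y.powerset.filter (fun S => S.Nonempty),
        ∑ V ∈ S.powerset.filter (fun V => V.Nonempty), g S V
      = ∑ V ∈ Y.powerset.filter (fun V => V.Nonempty),
          ∑ X ∈ (Y \ V).powerset, g (V ∪ X) V := by
  have h1 : ∑ S ∈ Y.powerset.filter (fun S => S.Nonempty),
      ∑ V ∈ S.powerset.filter (fun V => V.Nonempty), g S V
      = ∑ S ∈ Y.powerset, ∑ V ∈ S.powerset.filter (fun V => V.Nonempty), g S V := by
    refine Finset.sum_subset (Finset.filter_subset _ _) ?_
    intro S hS hS'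
    have : S = ∅ := by
      by_contra h
      exact hS' (mem_filter.mpr ⟨hS, Finset.nonempty_iff_ne_empty.mpr h⟩)
    subst this
    rw [Finset.powerset_empty, Finset.filter_singleton,
      if_neg Finset.not_nonempty_empty, Finset.sum_empty]
  rw [h1]
  have h2 : ∀ S ∈ Y.powerset, ∑ V ∈ S.powerset.filter (fun V => V.Nonempty), g S V
      = ∑ V ∈ S.powerset, if V.Nonempty then g S V else 0 := fun S _ =>
    (Finset.sum_filter _ _)
  rw [Finset.sum_congr rfl h2,
    sum_powerset_powerset Y (fun S V => if V.Nonempty then g S V else 0)]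
  have h3 : ∀ V ∈ Y.powerset, (∑ X ∈ (Y \ V).powerset, if V.Nonempty then g (V ∪ X) V else 0)
      = if V.Nonempty then ∑ X ∈ (Y \ V).powerset, g (V ∪ X) V else 0 := by
    intro V _
    by_cases hV : V.Nonempty <;> simp [hV]
  rw [Finset.sum_congr rfl h3, ← Finset.sum_filter]

lemma sum_powerset_empty_delta {M : Type*} [AddCommMonoid M] (T : Finset γ)
    (h : Finset γ → M) :
    ∑ W ∈ T.powerset, (if W = ∅ then h W else 0) = h ∅ := by
  rw [Finset.sum_eq_single ∅]
  · simp
  · intro W _ hne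
    exact if_neg hne
  · intro h'
    exact absurd (Finset.empty_mem_powerset T) h'

lemma mixed_cumul (f : R → S) (b : R) (c : γ → R) (T : Finset γ) :
    cumul f (T.card + 1) (Fin.cons b (restr c T))
      = ∑ U ∈ T.powerset, ∑ Q ∈ sParts (T \ U),
          ((-1 : ℤ) ^ Q.card * (Q.card.factorial : ℤ)) •
            (f (b * ∏ x ∈ U, c x) * ∏ t ∈ Q, f (∏ x ∈ t, c x)) := by
  classical
  set c' : Option γ → R := fun o => o.elim b c with hc'
  set e' : Fin (T.card + 1) → Option γ :=
    Fin.cons none (fun i => some ((T.equivFin.symm i : {x // x ∈ T}) : γ)) with he'def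
  have hcons : Fin.cons b (restr c T) = c' ∘ e' := by
    funext i
    refine Fin.cases ?_ ?_ i
    · simp [he'def, hc']
    · intro j
      simp [he'def, hc', restr]
  have he'inj : Function.Injective e' := by
    intro i j hij
    induction i using Fin.cases with
    | zero =>
      induction j using Fin.cases with
      | zero => rfl
      | succ j => simp [he'def] at hij
    | succ i =>
      induction j using Fin.cases with
      | zero => simp [he'def] at hij
      | succ j =>
        simp only [he'def, Fin.cons_succ, Option.some.injEq] at hij
        rw [T.equivFin.symm.injective (Subtype.ext hij)]
  have himg : Finset.univ.image e' = insert none (T.image some) := by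
    ext o
    simp only [mem_image, mem_univ, true_and, mem_insert]
    constructor
    · rintro ⟨i, rfl⟩
      refine Fin.cases ?_ ?_ i
      · left
        simp [he'def]
      · intro j
        right
        refine ⟨((T.equivFin.symm j : {x // x ∈ T}) : γ), (T.equivFin.symm j).2, ?_⟩
        simp [he'def]
    · rintro (rfl | ho)
      · exact ⟨0, by simp [he'def]⟩
      · obtain ⟨y, hy, rfl⟩ := ho
        refine ⟨(T.equivFin ⟨y, hy⟩).succ, ?_⟩
        simp [he'def]
  rw [hcons]
  have hm : T.card + 1 = (Finset.univ : Finset (Fin (T.card + 1))).card := by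
    rw [Finset.card_univ, Fintype.card_fin]
  rw [cumul_comp f c' e' he'inj, himg]
  have hnone : (none : Option γ) ∉ T.image some := by simp
  rw [sCumul, sum_sParts_insert (none : Option γ) (T.image some) hnone
    (fun P => cw P.card • ∏ s ∈ P, f (∏ x ∈ s, c' x))]
  rw [sum_powerset_image some (Option.some_injective γ) T (fun U' =>
    ∑ Q ∈ sParts (T.image some \ U'),
      cw (insert (insert none U') Q).card • ∏ s ∈ insert (insert none U') Q,
        f (∏ x ∈ s, c' x))]
  refine Finset.sum_congr rfl fun U hU => ?_
  have hsd : T.image some \ U.image some = (T \ U).image some :=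
    (Finset.image_sdiff T U (Option.some_injective γ)).symm
  rw [hsd, sum_sParts_image some (Option.some_injective γ) (T \ U) (fun Q =>
    cw (insert (insert none (U.image some)) Q).card •
      ∏ s ∈ insert (insert none (U.image some)) Q, f (∏ x ∈ s, c' x))]
  refine Finset.sum_congr rfl fun Q hQ => ?_
  have hnotin : insert none (U.image some) ∉ Q.image (Finset.image some) := by
    intro hmem
    obtain ⟨t, -, ht⟩ := mem_image.mp hmem
    have : (none : Option γ) ∈ t.image some := ht ▸ mem_insert_self _ _
    simp at this
  have hcard : (insert (insert none (U.image some)) (Q.image (Finset.image some))).card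
      = Q.card + 1 := by
    rw [Finset.card_insert_of_notMem hnotin,
      Finset.card_image_of_injective _ (Finset.image_injective (Option.some_injective γ))]
  have hcw : cw (Q.card + 1) = (-1 : ℤ) ^ Q.card * (Q.card.factorial : ℤ) := by
    unfold cw
    simp only [Nat.add_sub_cancel]
  have hprod1 : ∏ x ∈ insert none (U.image some), c' x = b * ∏ y ∈ U, c y := by
    rw [Finset.prod_insert (by simp : (none : Option γ) ∉ U.image some),
      Finset.prod_image (fun x _ y _ h => Option.some_injective γ h)]
    rfl
  have hprod2 : ∏ s ∈ Q.image (Finset.image some), f (∏ x ∈ s, c' x)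
      = ∏ t ∈ Q, f (∏ y ∈ t, c y) := by
    rw [Finset.prod_image (fun x _ y _ h => Finset.image_injective (Option.some_injective γ) h)]
    refine Finset.prod_congr rfl fun t _ => ?_
    rw [Finset.prod_image (fun x _ y _ h => Option.some_injective γ h)]
    rfl
  rw [Finset.prod_insert hnotin, hcard, hcw, hprod1, hprod2]

end SetLevel


/-- if `f∘Δ = Δ′∘f` then `κ(f)∘K(Δ) = K(Δ′)∘κ(f)`, i.e. in Taylor coefficients:
`Σ_{i=1}^{n} Σ_{|S|=i} κ(f)_{n−i+1}(K(Δ)_i((a_s)_{s∈S}),(a_j)_{j∉S})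
 = Σ_{partitions} K(Δ′)_k(κ(f)_{|I_1|}(…),…,κ(f)_{|I_k|}(…))`. -/
theorem cumulants_intertwine_koszul (K A B : Type*) [Field K] [CharZero K]
    [CommRing A] [Algebra K A] [CommRing B] [Algebra K B]
    (Δ : A →ₗ[K] A) (Δ' : B →ₗ[K] B) (f : A →ₗ[K] B)
    (hΔ : Δ 1 = 0) (hΔ' : Δ' 1 = 0) (hf : f 1 = 1)
    (hcomm : ∀ a : A, f (Δ a) = Δ' (f a)) :
    ∀ (n : ℕ), 1 ≤ n → ∀ a : Fin n → A,
      (∑ i ∈ Finset.Icc 1 n,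
        ∑ S ∈ (Finset.univ : Finset (Fin n)).powerset.filter fun S => S.card = i,
          cumul (⇑f) (Sᶜ.card + 1)
            (Fin.cons (koszul (⇑Δ) S.card (restr a S)) (restr a Sᶜ))) =
      ∑ P ∈ partitionsOf n,
        koszul (⇑Δ') P.card fun j =>
          cumul (⇑f) ((P.equivFin.symm j).1.card) (restr a (P.equivFin.symm j).1) := by
  intro n hn a
  classical
  set F : Finset (Fin n) → B := fun V => f (∏ x ∈ V, a x) with hFdef
  have hF : F ∅ = 1 := by simp [hFdef, hf]
  set G : Finset (Fin n) → B := fun V => f (Δ (∏ x ∈ V, a x)) with hGdef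
  have hGΔ' : ∀ V, G V = Δ' (F V) := fun V => hcomm _
  have hG0 : G ∅ = 0 := by simp [hGdef, hΔ]
  -- RHS chain
  have hRHSterm : ∀ P : Finset (Finset (Fin n)),
      (koszul (⇑Δ') P.card fun j =>
        cumul (⇑f) ((P.equivFin.symm j).1.card) (restr a (P.equivFin.symm j).1))
      = sKoszul (⇑Δ') (kap F) P := by
    intro P
    have h1 : (fun j => cumul (⇑f) ((P.equivFin.symm j).1.card)
          (restr a (P.equivFin.symm j).1))
        = (kap F) ∘ (fun j => ((P.equivFin.symm j : {x // x ∈ P}) : Finset (Fin n))) := by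
      funext j
      show cumul (⇑f) _ (restr a _) = kap F _
      rw [cumul_restr]
      rfl
    rw [h1, koszul_comp (⇑Δ') (kap F) _ (equivFin_injective P), image_equivFin]
  have hRHS : (∑ P ∈ partitionsOf n,
        koszul (⇑Δ') P.card fun j =>
          cumul (⇑f) ((P.equivFin.symm j).1.card) (restr a (P.equivFin.symm j).1))
      = ∑ W ∈ (Finset.univ : Finset (Fin n)).powerset,
          G W * invW F (Finset.univ \ W) := by
    rw [Finset.sum_congr rfl (fun P _ => hRHSterm P), partitionsOf_eq_sParts]
    have step1 : ∀ P ∈ sParts (Finset.univ : Finset (Fin n)),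
        sKoszul (⇑Δ') (kap F) P = ∑ R ∈ P.powerset,
          ((-1 : ℤ) ^ (P \ R).card) • (Δ' (∏ s ∈ R, kap F s) * ∏ s ∈ P \ R, kap F s) := by
      intro P hP
      rw [sKoszul]
      rw [Finset.sum_filter]
      refine Finset.sum_congr rfl fun R hR => ?_
      have hcard : P.card - R.card = (P \ R).card :=
        (Finset.card_sdiff_of_subset (mem_powerset.mp hR)).symm
      rw [hcard]
      by_cases hRne : R.Nonempty
      · rw [if_pos hRne]
      · rw [if_neg hRne]
        rw [Finset.not_nonempty_iff_eq_empty.mp hRne]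
        rw [Finset.prod_empty, hΔ', zero_mul, smul_zero]
    rw [Finset.sum_congr rfl step1,
      sum_sParts_split (Finset.univ : Finset (Fin n)) (fun R Q =>
        ((-1 : ℤ) ^ Q.card) • (Δ' (∏ s ∈ R, kap F s) * ∏ s ∈ Q, kap F s))]
    refine Finset.sum_congr rfl fun W hW => ?_
    have hfact : ∑ R ∈ sParts W, ∑ Q ∈ sParts (Finset.univ \ W),
        ((-1 : ℤ) ^ Q.card) • (Δ' (∏ s ∈ R, kap F s) * ∏ s ∈ Q, kap F s)
        = (∑ R ∈ sParts W, Δ' (∏ s ∈ R, kap F s))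
          * ∑ Q ∈ sParts (Finset.univ \ W), ((-1 : ℤ) ^ Q.card) • ∏ s ∈ Q, kap F s := by
      rw [Finset.sum_mul_sum]
      refine Finset.sum_congr rfl fun R _ => Finset.sum_congr rfl fun Q _ => ?_
      rw [mul_smul_comm]
    rw [hfact, ← map_sum]
    have : (∑ R ∈ sParts W, ∏ s ∈ R, kap F s) = F W := expK_eq F hF W
    rw [this, ← negK, negK_eq_invW F hF, hGΔ' W]
  rw [hRHS]
  -- LHS chain
  -- Step 1: collapse the double sum over (i, S with |S| = i) into a sum over nonempty S
  have hmaps : ∀ S ∈ (Finset.univ : Finset (Fin n)).powerset.filter (fun S => S.Nonempty),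
      S.card ∈ Finset.Icc 1 n := by
    intro S hS
    obtain ⟨-, hne⟩ := mem_filter.mp hS
    refine Finset.mem_Icc.mpr ⟨Finset.card_pos.mpr hne, ?_⟩
    calc S.card ≤ (Finset.univ : Finset (Fin n)).card := Finset.card_le_univ S
    _ = n := by rw [Finset.card_univ, Fintype.card_fin]
  have hfib : ∀ i ∈ Finset.Icc 1 n,
      ((Finset.univ : Finset (Fin n)).powerset.filter fun S => S.card = i)
      = ((Finset.univ : Finset (Fin n)).powerset.filter fun S => S.Nonempty).filter
          (fun S => S.card = i) := by
    intro i hi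
    rw [Finset.filter_filter]
    ext S
    simp only [mem_filter, mem_powerset]
    constructor
    · rintro ⟨h1, h2⟩
      refine ⟨h1, ?_, h2⟩
      rw [← Finset.card_pos, h2]
      exact (Finset.mem_Icc.mp hi).1
    · rintro ⟨h1, -, h2⟩
      exact ⟨h1, h2⟩
  rw [Finset.sum_congr rfl (fun i hi => by rw [hfib i hi]),
    Finset.sum_fiberwise_of_maps_to hmaps (fun S => cumul (⇑f) (Sᶜ.card + 1)
      (Fin.cons (koszul (⇑Δ) S.card (restr a S)) (restr a Sᶜ)))]
  -- Step 2: rewrite each term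
  have hterm : ∀ S ∈ ((Finset.univ : Finset (Fin n)).powerset.filter fun S => S.Nonempty),
      cumul (⇑f) (Sᶜ.card + 1)
          (Fin.cons (koszul (⇑Δ) S.card (restr a S)) (restr a Sᶜ))
      = ∑ V ∈ S.powerset.filter (fun V => V.Nonempty), ∑ U ∈ Sᶜ.powerset,
          ∑ Q ∈ sParts (Sᶜ \ U),
          ((-1 : ℤ) ^ Q.card * (Q.card.factorial : ℤ)) •
            ((((-1 : ℤ) ^ (S.card - V.card)) •
              f (Δ (∏ x ∈ V, a x) * ∏ x ∈ (S \ V) ∪ U, a x)) * ∏ t ∈ Q, F t) := by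
    intro S hS
    rw [koszul_restr, mixed_cumul (⇑f) _ a Sᶜ]
    have hidx : ∀ U ∈ Sᶜ.powerset,
        (∑ Q ∈ sParts (Sᶜ \ U), ((-1 : ℤ) ^ Q.card * (Q.card.factorial : ℤ)) •
          (f (sKoszul (⇑Δ) a S * ∏ x ∈ U, a x) * ∏ t ∈ Q, f (∏ x ∈ t, a x)))
        = ∑ Q ∈ sParts (Sᶜ \ U), ∑ V ∈ S.powerset.filter (fun V => V.Nonempty),
            ((-1 : ℤ) ^ Q.card * (Q.card.factorial : ℤ)) •
              ((((-1 : ℤ) ^ (S.card - V.card)) •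
                f (Δ (∏ x ∈ V, a x) * ∏ x ∈ (S \ V) ∪ U, a x)) * ∏ t ∈ Q, F t) := by
      intro U hU
      refine Finset.sum_congr rfl fun Q hQ => ?_
      have hf1 : f (sKoszul (⇑Δ) a S * ∏ x ∈ U, a x)
          = ∑ V ∈ S.powerset.filter (fun V => V.Nonempty),
              ((-1 : ℤ) ^ (S.card - V.card)) •
                f (Δ (∏ x ∈ V, a x) * ∏ x ∈ (S \ V) ∪ U, a x) := by
        rw [sKoszul, Finset.sum_mul, map_sum]
        refine Finset.sum_congr rfl fun V hV => ?_
        rw [smul_mul_assoc, map_zsmul]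
        congr 1
        have hdisj : Disjoint (S \ V) U :=
          Finset.disjoint_of_subset_left Finset.sdiff_subset
            (Finset.disjoint_of_subset_right (mem_powerset.mp hU)
              (disjoint_compl_right))
        rw [mul_assoc, ← Finset.prod_union hdisj]
      rw [hf1, Finset.sum_mul, Finset.smul_sum]
    rw [Finset.sum_congr rfl hidx]
    rw [Finset.sum_comm]
    exact Finset.sum_congr rfl fun V _ => Finset.sum_comm
  rw [Finset.sum_congr rfl hterm,
    sum_powerset_powerset_filter (Finset.univ : Finset (Fin n)) (fun S V =>
      ∑ U ∈ Sᶜ.powerset, ∑ Q ∈ sParts (Sᶜ \ U),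
        ((-1 : ℤ) ^ Q.card * (Q.card.factorial : ℤ)) •
          ((((-1 : ℤ) ^ (S.card - V.card)) •
            f (Δ (∏ x ∈ V, a x) * ∏ x ∈ (S \ V) ∪ U, a x)) * ∏ t ∈ Q, F t))]
  -- Step 3: per nonempty V, collapse the (X, U) sums
  have hinner : ∀ V ∈ ((Finset.univ : Finset (Fin n)).powerset.filter fun V => V.Nonempty),
      (∑ X ∈ (Finset.univ \ V).powerset, ∑ U ∈ (V ∪ X)ᶜ.powerset,
        ∑ Q ∈ sParts ((V ∪ X)ᶜ \ U),
          ((-1 : ℤ) ^ Q.card * (Q.card.factorial : ℤ)) •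
            ((((-1 : ℤ) ^ ((V ∪ X).card - V.card)) •
              f (Δ (∏ x ∈ V, a x) * ∏ x ∈ ((V ∪ X) \ V) ∪ U, a x)) * ∏ t ∈ Q, F t))
      = G V * invW F (Finset.univ \ V) := by
    intro V hV
    have hVsub : V ⊆ Finset.univ := mem_powerset.mp (mem_filter.mp hV).1
    have hstep : ∀ X ∈ (Finset.univ \ V).powerset,
        (∑ U ∈ (V ∪ X)ᶜ.powerset, ∑ Q ∈ sParts ((V ∪ X)ᶜ \ U),
          ((-1 : ℤ) ^ Q.card * (Q.card.factorial : ℤ)) •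
            ((((-1 : ℤ) ^ ((V ∪ X).card - V.card)) •
              f (Δ (∏ x ∈ V, a x) * ∏ x ∈ ((V ∪ X) \ V) ∪ U, a x)) * ∏ t ∈ Q, F t))
        = ∑ U ∈ ((Finset.univ \ V) \ X).powerset,
            ∑ Q ∈ sParts ((Finset.univ \ V) \ (X ∪ U)),
          ((-1 : ℤ) ^ Q.card * (Q.card.factorial : ℤ)) •
            ((((-1 : ℤ) ^ X.card) •
              f (Δ (∏ x ∈ V, a x) * ∏ x ∈ X ∪ U, a x)) * ∏ t ∈ Q, F t) := by
      intro X hX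
      have hXV : Disjoint V X :=
        Finset.disjoint_of_subset_right (mem_powerset.mp hX) Finset.disjoint_sdiff
      have hc1 : (V ∪ X)ᶜ = (Finset.univ \ V) \ X := by
        ext y
        simp only [Finset.mem_compl, Finset.mem_sdiff, Finset.mem_union, Finset.mem_univ,
          true_and]
        tauto
      have hc2 : (V ∪ X) \ V = X := Finset.union_sdiff_cancel_left hXV
      have hc3 : (V ∪ X).card - V.card = X.card := by
        rw [Finset.card_union_of_disjoint hXV]
        omega
      rw [hc1, hc2, hc3]
      refine Finset.sum_congr rfl fun U hU => ?_
      have hc4 : ((Finset.univ \ V) \ X) \ U = (Finset.univ \ V) \ (X ∪ U) := by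
        ext y
        simp only [Finset.mem_sdiff, Finset.mem_union]
        tauto
      rw [hc4]
    rw [Finset.sum_congr rfl hstep,
      ← sum_powerset_powerset (Finset.univ \ V) (fun W X =>
        ∑ Q ∈ sParts ((Finset.univ \ V) \ W),
          ((-1 : ℤ) ^ Q.card * (Q.card.factorial : ℤ)) •
            ((((-1 : ℤ) ^ X.card) •
              f (Δ (∏ x ∈ V, a x) * ∏ x ∈ W, a x)) * ∏ t ∈ Q, F t))]
    have hW : ∀ W ∈ (Finset.univ \ V).powerset,
        (∑ X ∈ W.powerset, ∑ Q ∈ sParts ((Finset.univ \ V) \ W),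
          ((-1 : ℤ) ^ Q.card * (Q.card.factorial : ℤ)) •
            ((((-1 : ℤ) ^ X.card) •
              f (Δ (∏ x ∈ V, a x) * ∏ x ∈ W, a x)) * ∏ t ∈ Q, F t))
        = if W = ∅ then G V * invW F (Finset.univ \ V) else 0 := by
      intro W hWmem
      have hx : ∀ Q ∈ sParts ((Finset.univ \ V) \ W),
          (∑ X ∈ W.powerset, ((-1 : ℤ) ^ Q.card * (Q.card.factorial : ℤ)) •
            ((((-1 : ℤ) ^ X.card) •
              f (Δ (∏ x ∈ V, a x) * ∏ x ∈ W, a x)) * ∏ t ∈ Q, F t))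
          = if W = ∅ then ((-1 : ℤ) ^ Q.card * (Q.card.factorial : ℤ)) •
              (f (Δ (∏ x ∈ V, a x) * ∏ x ∈ W, a x) * ∏ t ∈ Q, F t) else 0 := by
        intro Q _
        have hre : ∀ X ∈ W.powerset,
            ((-1 : ℤ) ^ Q.card * (Q.card.factorial : ℤ)) •
              ((((-1 : ℤ) ^ X.card) •
                f (Δ (∏ x ∈ V, a x) * ∏ x ∈ W, a x)) * ∏ t ∈ Q, F t)
            = ((-1 : ℤ) ^ X.card) • (((-1 : ℤ) ^ Q.card * (Q.card.factorial : ℤ)) •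
                (f (Δ (∏ x ∈ V, a x) * ∏ x ∈ W, a x) * ∏ t ∈ Q, F t)) := by
          intro X _
          rw [smul_mul_assoc, smul_comm]
        rw [Finset.sum_congr rfl hre, ← Finset.sum_smul,
          Finset.sum_powerset_neg_one_pow_card]
        split
        · rw [one_smul]
        · rw [zero_smul]
      rw [Finset.sum_comm, Finset.sum_congr rfl hx]
      by_cases hWe : W = ∅
      · subst hWe
        rw [if_pos rfl, Finset.sum_congr rfl (fun Q _ => if_pos rfl)]
        simp only [Finset.sdiff_empty, Finset.prod_empty, mul_one]
        rw [invW, Finset.mul_sum]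
        refine Finset.sum_congr rfl fun Q _ => ?_
        rw [mul_smul_comm]
      · rw [if_neg hWe]
        exact Finset.sum_eq_zero fun Q _ => if_neg hWe
    rw [Finset.sum_congr rfl hW,
      sum_powerset_empty_delta (Finset.univ \ V)
        (fun _ => G V * invW F (Finset.univ \ V))]
  rw [Finset.sum_congr rfl hinner]
  -- Step 4: extend the sum over nonempty V to all of the powerset
  refine Finset.sum_subset (Finset.filter_subset _ _) ?_
  intro V _ hV'
  have : V = ∅ := by
    by_contra h
    exact hV' (mem_filter.mpr ⟨Finset.mem_powerset.mpr (Finset.subset_univ V),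
      Finset.nonempty_iff_ne_empty.mpr h⟩)
  subst this
  rw [hG0, zero_mul]
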